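/- For the Tribonacci word (k = 3), let x_i, y_i, z_i be the positions of the i-th occurrence of 0, 1, 2 respectively. Then the sequences a_i = y_i − x_i and b_i = z_i − y_i are complementary: every positive integer occurs exactly once in exactly one of the two sequences. -/

import Mathlib

/-- The Tribonacci substitution 0 ↦ 01, 1 ↦ 02, 2 ↦ 0, applied letterwise. -/
def tribSub (w : List ℕ) : List ℕ :=
  w.flatMap (fun j => if j + 1 < 3 then [0, j + 1] else [0])

/-- The Tribonacci word (0-indexed), the fixed point starting with 0. -/
def trib (n : ℕ) : ℕ := (tribSub^[n + 1] [0]).getD n 0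

/-- The 1-based position of the i-th (1-based) occurrence of letter j
in the Tribonacci word. -/
noncomputable def tribPos (j i : ℕ) : ℕ :=
  Nat.nth (fun m => trib m = j) (i - 1) + 1

/-- a_i = y_i − x_i and b_i = z_i − y_i, where x, y, z are the position
sequences of 0, 1, 2 in the Tribonacci word. -/
noncomputable def aSeq (i : ℕ) : ℕ := tribPos 1 i - tribPos 0 i
noncomputable def bSeq (i : ℕ) : ℕ := tribPos 2 i - tribPos 1 i

namespace TribAux

def W (k : ℕ) : List ℕ := tribSub^[k] [0]

lemma W_succ (k : ℕ) : W (k+1) = tribSub (W k) := Function.iterate_succ_apply' _ _ _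

lemma trib_eq (n : ℕ) : trib n = (W (n+1)).getD n 0 := rfl

lemma tribSub_append (u v : List ℕ) : tribSub (u ++ v) = tribSub u ++ tribSub v :=
  List.flatMap_append

lemma tribSub_cons (c : ℕ) (t : List ℕ) :
    tribSub (c :: t) = (if c + 1 < 3 then [0, c+1] else [0]) ++ tribSub t :=
  List.flatMap_cons

lemma tribSub_prefix {u v : List ℕ} (h : u <+: v) : tribSub u <+: tribSub v := by
  obtain ⟨t, rfl⟩ := h
  exact ⟨tribSub t, (tribSub_append u t).symm⟩

lemma W_prefix_succ (k : ℕ) : W k <+: W (k+1) := by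
  induction k with
  | zero =>
    show [0] <+: W 1
    have : W 1 = [0, 1] := by decide
    rw [this]; exact ⟨[1], rfl⟩
  | succ n ih =>
    rw [W_succ, W_succ]
    exact tribSub_prefix ih

lemma W_prefix {a b : ℕ} (h : a ≤ b) : W a <+: W b := by
  induction b with
  | zero => simp_all
  | succ n ih =>
    rcases Nat.lt_or_ge a (n+1) with h' | h'
    · exact (ih (by omega)).trans (W_prefix_succ n)
    · have : a = n+1 := by omega
      subst this; exact List.prefix_rfl

lemma length_tribSub_ge (w : List ℕ) : w.length ≤ (tribSub w).length := by
  induction w with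
  | nil => simp [tribSub]
  | cons c t ih =>
    rw [tribSub_cons, List.length_append]
    split <;> simp <;> omega

lemma W_length (k : ℕ) : k < (W k).length := by
  induction k with
  | zero => decide
  | succ n ih =>
    have h0 : [0] <+: W n := W_prefix (Nat.zero_le n)
    obtain ⟨t, ht⟩ := h0
    have ht' : (0 : ℕ) :: t = W n := ht
    rw [W_succ, ← ht', tribSub_cons]
    have := length_tribSub_ge t
    rw [List.length_append]
    rw [← ht'] at ih
    simp at ih ⊢
    omega

lemma getD_prefix {u v : List ℕ} (h : u <+: v) {m : ℕ} (hm : m < u.length) :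
    v.getD m 0 = u.getD m 0 := by
  obtain ⟨t, rfl⟩ := h
  exact List.getD_append u t 0 m hm

lemma trib_stable {k m : ℕ} (h : m < (W k).length) : (W k).getD m 0 = trib m := by
  rcases Nat.le_total k (m+1) with h' | h'
  · rw [trib_eq]
    exact (getD_prefix (W_prefix h') h).symm
  · rw [trib_eq]
    have hm : m < (W (m+1)).length := Nat.lt_trans (Nat.lt_succ_self m) (W_length (m+1))
    exact (getD_prefix (W_prefix h') hm)

lemma mem_tribSub_lt {c : ℕ} {w : List ℕ} (h : c ∈ tribSub w) : c < 3 := by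
  rw [tribSub, List.mem_flatMap] at h
  obtain ⟨j, _, hj⟩ := h
  split at hj <;> simp at hj <;> omega

lemma trib_lt (n : ℕ) : trib n < 3 := by
  have hlen : n < (W (n+1)).length := Nat.lt_trans (Nat.lt_succ_self n) (W_length (n+1))
  rw [trib_eq, List.getD_eq_getElem _ _ hlen]
  apply mem_tribSub_lt (w := W n)
  rw [← W_succ]
  exact List.getElem_mem hlen

/-- abstract image-length function -/
def Lf : ℕ → ℕ
  | 0 => 0
  | n+1 => Lf n + (if trib n = 2 then 1 else 2)

lemma Lf_succ (n : ℕ) : Lf (n+1) = Lf n + (if trib n = 2 then 1 else 2) := rfl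

lemma Lf_strictMono : StrictMono Lf := by
  apply strictMono_nat_of_lt_succ
  intro n; rw [Lf_succ]; split <;> omega

lemma le_Lf (n : ℕ) : n ≤ Lf n := by
  induction n with
  | zero => simp [Lf]
  | succ n ih => rw [Lf_succ]; split <;> omega

lemma sigma_take {k : ℕ} : ∀ {n : ℕ}, n ≤ (W k).length →
    (tribSub ((W k).take n)).length = Lf n := by
  intro n
  induction n with
  | zero => intro _; simp [tribSub, Lf]
  | succ n ih =>
    intro h
    have hn : n < (W k).length := by omega
    have htake : (W k).take (n+1) = (W k).take n ++ [(W k)[n]] := by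
      rw [List.take_succ, List.getElem?_eq_getElem hn]
      rfl
    have hc : (W k)[n] = trib n := by
      rw [← trib_stable hn]; exact (List.getD_eq_getElem _ _ hn).symm
    rw [htake, tribSub_append, List.length_append, ih (by omega), hc, Lf_succ, tribSub_cons]
    have h3 := trib_lt n
    interval_cases h : trib n <;> simp [tribSub]

/-- the master structural lemma -/
lemma master (n : ℕ) : trib (Lf n) = 0 ∧
    (trib n = 0 → trib (Lf n + 1) = 1) ∧
    (trib n = 1 → trib (Lf n + 1) = 2) := by
  set w := W (n+1) with hw
  have hn : n < w.length := Nat.lt_trans (Nat.lt_succ_self n) (W_length (n+1))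
  have hdrop : w.drop n = w[n] :: w.drop (n+1) := List.drop_eq_getElem_cons hn
  have hc : w[n] = trib n := by
    rw [← trib_stable hn]; exact (List.getD_eq_getElem _ _ hn).symm
  have hsplit : W (n+2) = tribSub (w.take n) ++ tribSub (w.drop n) := by
    rw [show n+2 = (n+1)+1 by rfl, W_succ, ← hw, ← tribSub_append, List.take_append_drop]
  have hn' : n ≤ (W (n+1)).length := by rw [← hw]; omega
  have hlen : (tribSub (w.take n)).length = Lf n := sigma_take hn'
  have hdec : tribSub (w.drop n) =
      (if trib n + 1 < 3 then [0, trib n + 1] else [0]) ++ tribSub (w.drop (n+1)) := by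
    rw [hdrop, tribSub_cons, hc]
  -- getD of W (n+2) at Lf n + i equals getD of the tail part at i
  have hget : ∀ i : ℕ, (W (n+2)).getD (Lf n + i) 0 = (tribSub (w.drop n)).getD i 0 := by
    intro i
    rw [hsplit, List.getD_append_right _ _ 0 _ (by omega), hlen]
    congr 1; omega
  have hstab : ∀ i : ℕ, i < (tribSub (w.drop n)).length → trib (Lf n + i) = (tribSub (w.drop n)).getD i 0 := by
    intro i hi
    rw [← hget i]
    apply (trib_stable _).symm
    rw [hsplit, List.length_append, hlen]
    omega
  have h3 := trib_lt n
  refine ⟨?_, ?_, ?_⟩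
  · have := hstab 0 (by rw [hdec, List.length_append]; split <;> simp)
    rw [hdec] at this
    split at this <;> simpa using this
  · intro h0
    have := hstab 1 (by rw [hdec, h0, List.length_append]; simp; omega)
    rw [hdec, h0] at this
    simpa using this
  · intro h1
    have := hstab 1 (by rw [hdec, h1, List.length_append]; simp; omega)
    rw [hdec, h1] at this
    simpa using this

lemma trib_Lf (n : ℕ) : trib (Lf n) = 0 := (master n).1

lemma exists_interval (g : ℕ → ℕ) (h0 : g 0 = 0) (hs : ∀ n, g n < g (n+1)) (m : ℕ) :
    ∃ n, g n ≤ m ∧ m < g (n+1) := by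
  induction m with
  | zero => exact ⟨0, by omega, by have := hs 0; omega⟩
  | succ m ih =>
    obtain ⟨n, h1, h2⟩ := ih
    rcases Nat.lt_or_ge (m+1) (g (n+1)) with h | h
    · exact ⟨n, by omega, h⟩
    · exact ⟨n+1, h, by have := hs (n+1); omega⟩

lemma zero_iff {m : ℕ} : trib m = 0 ↔ ∃ n, Lf n = m := by
  constructor
  · intro h
    obtain ⟨n, h1, h2⟩ := exists_interval Lf rfl (fun n => Lf_strictMono (Nat.lt_succ_self n)) m
    rcases Nat.eq_or_lt_of_le h1 with he | hlt
    · exact ⟨n, he⟩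
    · exfalso
      rw [Lf_succ] at h2
      have hm : m = Lf n + 1 := by split at h2 <;> omega
      have hstep : ¬ (trib n = 2) := by intro h2'; rw [if_pos h2'] at h2; omega
      have h3 := trib_lt n
      rcases Nat.lt_or_ge (trib n) 1 with h' | h'
      · have h0 : trib n = 0 := by omega
        have := (master n).2.1 h0
        rw [← hm] at this; omega
      · have h1' : trib n = 1 := by omega
        have := (master n).2.2 h1'
        rw [← hm] at this; omega
  · rintro ⟨n, rfl⟩; exact trib_Lf n

lemma one_iff {m : ℕ} : trib m = 1 ↔ ∃ n, Lf (Lf n) + 1 = m := by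
  constructor
  · intro h
    obtain ⟨n, h1, h2⟩ := exists_interval Lf rfl (fun n => Lf_strictMono (Nat.lt_succ_self n)) m
    rcases Nat.eq_or_lt_of_le h1 with he | hlt
    · exfalso; rw [← he, trib_Lf] at h; omega
    · rw [Lf_succ] at h2
      have hm : m = Lf n + 1 := by split at h2 <;> omega
      have hstep : ¬ (trib n = 2) := by intro h2'; rw [if_pos h2'] at h2; omega
      have h3 := trib_lt n
      rcases Nat.lt_or_ge (trib n) 1 with h' | h'
      · have h0 : trib n = 0 := by omega
        obtain ⟨j, rfl⟩ := zero_iff.1 h0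
        exact ⟨j, hm.symm⟩
      · exfalso
        have h1' : trib n = 1 := by omega
        have := (master n).2.2 h1'
        rw [← hm] at this; omega
  · rintro ⟨n, rfl⟩
    exact (master (Lf n)).2.1 (trib_Lf n)

lemma two_iff {m : ℕ} : trib m = 2 ↔ ∃ n, Lf (Lf (Lf n) + 1) + 1 = m := by
  constructor
  · intro h
    obtain ⟨n, h1, h2⟩ := exists_interval Lf rfl (fun n => Lf_strictMono (Nat.lt_succ_self n)) m
    rcases Nat.eq_or_lt_of_le h1 with he | hlt
    · exfalso; rw [← he, trib_Lf] at h; omega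
    · rw [Lf_succ] at h2
      have hm : m = Lf n + 1 := by split at h2 <;> omega
      have hstep : ¬ (trib n = 2) := by intro h2'; rw [if_pos h2'] at h2; omega
      have h3 := trib_lt n
      rcases Nat.lt_or_ge (trib n) 1 with h' | h'
      · exfalso
        have h0 : trib n = 0 := by omega
        have := (master n).2.1 h0
        rw [← hm] at this; omega
      · have h1' : trib n = 1 := by omega
        obtain ⟨j, rfl⟩ := one_iff.1 h1'
        exact ⟨j, hm.symm⟩
  · rintro ⟨n, rfl⟩
    exact (master (Lf (Lf n) + 1)).2.2 ((master (Lf n)).2.1 (trib_Lf n))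

-- count/nth machinery
lemma count_congr (p : ℕ → Prop) [DecidablePred p] {a : ℕ} : ∀ {b : ℕ}, a ≤ b →
    (∀ m, a ≤ m → m < b → ¬ p m) → Nat.count p b = Nat.count p a := by
  intro b
  induction b with
  | zero =>
    intro h _
    have : a = 0 := by omega
    rw [this]
  | succ b ih =>
    intro hab h
    rcases Nat.eq_or_lt_of_le hab with he | hlt
    · rw [he]
    · have hb : a ≤ b := by omega
      rw [Nat.count_succ, ih hb (fun m h1 h2 => h m h1 (by omega)), if_neg (h b hb (by omega)), Nat.add_zero]

lemma nth_of_strictMono (f : ℕ → ℕ) (hf : StrictMono f) (p : ℕ → Prop) [DecidablePred p]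
    (hp : ∀ m, p m ↔ ∃ k, f k = m) (k : ℕ) : Nat.nth p k = f k := by
  have hcount : ∀ k, Nat.count p (f k) = k := by
    intro k
    induction k with
    | zero =>
      have : Nat.count p (f 0) = Nat.count p 0 := by
        apply count_congr p (by omega)
        intro m _ hm hpm
        obtain ⟨j, rfl⟩ := (hp m).1 hpm
        have := hf.monotone (Nat.zero_le j)
        omega
      simpa using this
    | succ k ih =>
      have h1 : Nat.count p (f (k+1)) = Nat.count p (f k + 1) := by
        apply count_congr p
        · exact hf (Nat.lt_succ_self k)
        · intro m h1 h2 hpm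
          obtain ⟨j, rfl⟩ := (hp m).1 hpm
          have hj1 : k < j := hf.lt_iff_lt.1 (by omega)
          have := hf.le_iff_le.2 (by omega : k + 1 ≤ j)
          omega
      rw [h1, Nat.count_succ, if_pos ((hp (f k)).2 ⟨k, rfl⟩), ih]
  have := Nat.nth_count ((hp (f k)).2 ⟨k, rfl⟩)
  rwa [hcount k] at this

lemma nth_zero_eq (k : ℕ) : Nat.nth (fun m => trib m = 0) k = Lf k :=
  nth_of_strictMono Lf Lf_strictMono _ (fun m => zero_iff) k

lemma nth_one_eq (k : ℕ) : Nat.nth (fun m => trib m = 1) k = Lf (Lf k) + 1 :=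
  nth_of_strictMono (fun k => Lf (Lf k) + 1)
    (fun a b h => Nat.succ_lt_succ (Lf_strictMono (Lf_strictMono h))) _ (fun m => one_iff) k

lemma nth_two_eq (k : ℕ) : Nat.nth (fun m => trib m = 2) k = Lf (Lf (Lf k) + 1) + 1 :=
  nth_of_strictMono (fun k => Lf (Lf (Lf k) + 1) + 1)
    (fun a b h => Nat.succ_lt_succ (Lf_strictMono
      (Nat.succ_lt_succ (Lf_strictMono (Lf_strictMono h))))) _ (fun m => two_iff) k

/-- step-2-at-zeros counting function -/
def Mf : ℕ → ℕ
  | 0 => 0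
  | n+1 => Mf n + (if trib n = 0 then 2 else 1)

lemma Mf_succ (n : ℕ) : Mf (n+1) = Mf n + (if trib n = 0 then 2 else 1) := rfl

lemma Mf_strictMono : StrictMono Mf := by
  apply strictMono_nat_of_lt_succ
  intro n; rw [Mf_succ]; split <;> omega

lemma key (n : ℕ) : Lf (Lf n) = Lf n + Mf n := by
  induction n with
  | zero => simp [Lf, Mf]
  | succ n ih =>
    have h3 := trib_lt n
    have h0 : trib (Lf n) = 0 := trib_Lf n
    have eA : Lf (Lf n + 1) = Lf (Lf n) + 2 := by rw [Lf_succ, h0]; norm_num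
    rw [Lf_succ, Mf_succ]
    interval_cases h : trib n
    · have h1 : trib (Lf n + 1) = 1 := (master n).2.1 h
      have eB : Lf (Lf n + 2) = Lf (Lf n + 1) + 2 := by
        rw [show Lf n + 2 = (Lf n + 1) + 1 from rfl, Lf_succ, h1]; norm_num
      norm_num
      omega
    · have h2 : trib (Lf n + 1) = 2 := (master n).2.2 h
      have eB : Lf (Lf n + 2) = Lf (Lf n + 1) + 1 := by
        rw [show Lf n + 2 = (Lf n + 1) + 1 from rfl, Lf_succ, h2]; norm_num
      norm_num
      omega
    · norm_num
      omega

lemma aSeq_eq (i : ℕ) : aSeq i = Mf (i-1) + 1 := by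
  have hle : Lf (i-1) ≤ Lf (Lf (i-1)) := Lf_strictMono.monotone (le_Lf (i-1))
  have hk := key (i-1)
  rw [aSeq, tribPos, tribPos, nth_one_eq, nth_zero_eq]
  omega

lemma bSeq_eq (i : ℕ) : bSeq i = Mf (Lf (i-1)) + 2 := by
  have e1 : Lf (Lf (Lf (i-1)) + 1) = Lf (Lf (Lf (i-1))) + 2 := by
    rw [Lf_succ, trib_Lf (Lf (i-1))]; norm_num
  have e2 := key (Lf (i-1))
  rw [bSeq, tribPos, tribPos, nth_two_eq, nth_one_eq]
  omega

lemma Mf_step_lb (n : ℕ) : Mf n + 1 ≤ Mf (n+1) := by rw [Mf_succ]; split <;> omega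

lemma Mf_step_ub (n : ℕ) : Mf (n+1) ≤ Mf n + 2 := by rw [Mf_succ]; split <;> omega

lemma Mf_step2_of_zero {n : ℕ} (h : trib n = 0) : Mf (n+1) = Mf n + 2 := by
  rw [Mf_succ, if_pos h]

lemma Mf_zero_of_step2 {n : ℕ} (h : Mf n + 2 ≤ Mf (n+1)) : trib n = 0 := by
  rw [Mf_succ] at h; split at h
  · assumption
  · omega

lemma Mf_interval_unique {m n j : ℕ} (h1 : Mf n < m) (h2 : m ≤ Mf (n+1))
    (h3 : Mf j < m) (h4 : m ≤ Mf (j+1)) : n = j := by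
  rcases lt_trichotomy n j with h | h | h
  · have := Mf_strictMono.monotone (show n + 1 ≤ j by omega)
    omega
  · exact h
  · have := Mf_strictMono.monotone (show j + 1 ≤ n by omega)
    omega

end TribAux

/-- The sequences a and b are complementary: every positive integer occurs
exactly once, in exactly one of the two sequences. -/
theorem trib_differences_complementary :
    ∀ m : ℕ, 0 < m →
      ((∃! i, 1 ≤ i ∧ aSeq i = m) ∧ ¬ (∃ i, 1 ≤ i ∧ bSeq i = m)) ∨
      ((∃! i, 1 ≤ i ∧ bSeq i = m) ∧ ¬ (∃ i, 1 ≤ i ∧ aSeq i = m)) := by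
  intro m hm
  open TribAux in
  obtain ⟨n, hn1, hn2⟩ := exists_interval Mf rfl
    (fun n => Mf_strictMono (Nat.lt_succ_self n)) (m-1)
  have hlow : Mf n < m := by omega
  have hhigh : m ≤ Mf (n+1) := by omega
  have hub := Mf_step_ub n
  rcases (by omega : m = Mf n + 1 ∨ m = Mf n + 2) with hcase | hcase
  · -- m is in the a-sequence
    left
    constructor
    · refine ⟨n+1, ⟨by omega, by rw [aSeq_eq]; simpa using hcase.symm⟩, ?_⟩
      rintro i' ⟨hi', he⟩
      rw [aSeq_eq] at he
      have : i' - 1 = n := Mf_strictMono.injective (by omega)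
      omega
    · rintro ⟨i', hi', he⟩
      rw [bSeq_eq] at he
      set p := Lf (i'-1) with hp
      have hps : Mf (p+1) = Mf p + 2 := Mf_step2_of_zero (trib_Lf (i'-1))
      have hpn : p = n := Mf_interval_unique (by omega) (by omega) hlow hhigh
      rw [hpn] at he
      omega
  · -- m is in the b-sequence
    have hz : trib n = 0 := Mf_zero_of_step2 (by omega)
    obtain ⟨j, hj⟩ := zero_iff.1 hz
    right
    constructor
    · refine ⟨j+1, ⟨by omega, by rw [bSeq_eq]; simp [hj]; omega⟩, ?_⟩
      rintro i' ⟨hi', he⟩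
      rw [bSeq_eq] at he
      set p := Lf (i'-1) with hp
      have hps : Mf (p+1) = Mf p + 2 := Mf_step2_of_zero (trib_Lf (i'-1))
      have hpn : p = n := Mf_interval_unique (by omega) (by omega) hlow hhigh
      have : i' - 1 = j := Lf_strictMono.injective (by omega)
      omega
    · rintro ⟨i', hi', he⟩
      rw [aSeq_eq] at he
      have hlb := Mf_step_lb (i'-1)
      have hin : i' - 1 = n := Mf_interval_unique (by omega) (by omega) hlow hhigh
      rw [hin] at he
      omega
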